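/- Let Π be a HEF CNF theory. Then for every subset Π' ⊆ Π of its clauses and every set X of atoms, the projected theory Π'_X is HEF. -/
import Mathlib


structure Clause where
  head : Finset ℕ
  body : Finset ℕ
deriving DecidableEq

abbrev Theory := Finset Clause

/-- interpretation I satisfies clause c -/
def satC (I : Finset ℕ) (c : Clause) : Prop :=
  (c.head ∩ I).Nonempty ∨ ¬ c.body ⊆ I

def isModel (T : Theory) (I : Finset ℕ) : Prop := ∀ c ∈ T, satC I c

def isMinModel (T : Theory) (I : Finset ℕ) : Prop :=
  isModel T I ∧ ∀ J ⊂ I, ¬ isModel T J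

def Positive (T : Theory) : Prop := ∀ c ∈ T, c.head.Nonempty

def Horn (T : Theory) : Prop := ∀ c ∈ T, c.head.card = 1

/-- atoms occurring in a theory -/
def atoms (T : Theory) : Finset ℕ := T.biUnion (fun c => c.head ∪ c.body)

/-- c_{X←} : project head on X -/
def projHeadC (c : Clause) (X : Finset ℕ) : Clause := ⟨c.head ∩ X, c.body⟩
/-- c_X : project head and body on X -/
def projC (c : Clause) (X : Finset ℕ) : Clause := ⟨c.head ∩ X, c.body ∩ X⟩

/-- Π_{X←} -/
def projHeadT (T : Theory) (X : Finset ℕ) : Theory :=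
  (T.image (fun c => projHeadC c X)).filter (fun c => c.head.Nonempty)

/-- Π_X -/
def projT (T : Theory) (X : Finset ℕ) : Theory :=
  (T.image (fun c => projC c X)).filter (fun c => c.head.Nonempty)

/-- Π^{nd} : single-head fragment -/
def nd (T : Theory) : Theory := T.filter (fun c => c.head.card = 1)

/-- the steady set of M for Π is the minimal model of Π^{nd}_{M←} -/
def isSteady (T : Theory) (M S : Finset ℕ) : Prop :=
  isMinModel (nd (projHeadT T M)) S

def simpl (T : Theory) (M S : Finset ℕ) : Theory :=
  T.filter (fun c => c.head ∩ S = ∅ ∧ c.body ⊆ M)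

/-- simplified theory of Π w.r.t. M (with steady set S) -/
def simplT (T : Theory) (M S : Finset ℕ) : Theory := projT (simpl T M S) (M \ S)

/-- E erasable in M for T -/
def Erasable (T : Theory) (M E : Finset ℕ) : Prop :=
  E.Nonempty ∧ E ⊆ M ∧ isModel T (M \ E)

def Outbound (T : Theory) (Y Z : Finset ℕ) : Prop :=
  ∃ c ∈ T, (c.head ∩ Z).Nonempty ∧ (c.body ∩ (Y \ Z)).Nonempty ∧
    c.body ∩ Z = ∅ ∧ c.head ∩ (Y \ Z) = ∅

def Elementary (T : Theory) (Y : Finset ℕ) : Prop :=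
  Y.Nonempty ∧ Y ⊆ atoms T ∧ ∀ Z, Z ⊂ Y → Z.Nonempty → Outbound T Y Z

def HEF (T : Theory) : Prop :=
  ∀ c ∈ T, ∀ E, Elementary T E → (E ∩ c.head).card ≤ 1

def DisjunctiveSet (T : Theory) (S : Finset ℕ) : Prop :=
  ∃ c ∈ T, 1 < (c.head ∩ S).card

def SuperElementary (T : Theory) (X : Finset ℕ) : Prop :=
  Elementary T X ∧ ¬ Outbound T (atoms T) X

def posForm (T : Theory) (phi : ℕ) : Theory :=
  T.filter (fun c => c.head.Nonempty) ∪
  (T.filter (fun c => c.head = ∅)).image (fun c => ⟨{phi}, c.body⟩) ∪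
  (atoms T).image (fun a => ⟨{a}, {phi}⟩)

lemma atoms_projT_subset (T' : Theory) (X : Finset ℕ) :
    atoms (projT T' X) ⊆ atoms T' ∩ X := by
  intro a ha
  simp only [atoms, Finset.mem_biUnion] at ha
  obtain ⟨c, hc, hac⟩ := ha
  simp only [projT, Finset.mem_filter, Finset.mem_image] at hc
  obtain ⟨⟨c0, hc0, rfl⟩, -⟩ := hc
  simp only [projC, Finset.mem_union, Finset.mem_inter] at hac
  simp only [Finset.mem_inter, atoms, Finset.mem_biUnion]
  rcases hac with ⟨h1, h2⟩ | ⟨h1, h2⟩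
  · exact ⟨⟨c0, hc0, Finset.mem_union_left _ h1⟩, h2⟩
  · exact ⟨⟨c0, hc0, Finset.mem_union_right _ h1⟩, h2⟩

lemma atoms_mono {T' T : Theory} (h : T' ⊆ T) : atoms T' ⊆ atoms T := by
  intro a ha
  simp only [atoms, Finset.mem_biUnion] at *
  obtain ⟨c, hc, hac⟩ := ha
  exact ⟨c, h hc, hac⟩

lemma outbound_transfer {T' T : Theory} (hT' : T' ⊆ T) {X Y Z : Finset ℕ}
    (hY : Y ⊆ X) (hZ : Z ⊆ X) (h : Outbound (projT T' X) Y Z) : Outbound T Y Z := by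
  obtain ⟨c, hc, h1, h2, h3, h4⟩ := h
  simp only [projT, Finset.mem_filter, Finset.mem_image] at hc
  obtain ⟨⟨c0, hc0, rfl⟩, -⟩ := hc
  simp only [projC] at h1 h2 h3 h4
  refine ⟨c0, hT' hc0, ?_, ?_, ?_, ?_⟩
  · obtain ⟨a, ha⟩ := h1
    simp only [Finset.mem_inter] at ha
    exact ⟨a, Finset.mem_inter.mpr ⟨ha.1.1, ha.2⟩⟩
  · obtain ⟨a, ha⟩ := h2
    simp only [Finset.mem_inter] at ha
    exact ⟨a, Finset.mem_inter.mpr ⟨ha.1.1, ha.2⟩⟩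
  · apply Finset.eq_empty_of_forall_notMem
    intro a ha
    simp only [Finset.mem_inter] at ha
    have : a ∈ c0.body ∩ X ∩ Z := by
      simp only [Finset.mem_inter]
      exact ⟨⟨ha.1, hZ ha.2⟩, ha.2⟩
    rw [h3] at this
    exact Finset.notMem_empty a this
  · apply Finset.eq_empty_of_forall_notMem
    intro a ha
    simp only [Finset.mem_inter, Finset.mem_sdiff] at ha
    have : a ∈ c0.head ∩ X ∩ (Y \ Z) := by
      simp only [Finset.mem_inter, Finset.mem_sdiff]
      exact ⟨⟨ha.1, hY ha.2.1⟩, ha.2⟩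
    rw [h4] at this
    exact Finset.notMem_empty a this

lemma elementary_transfer {T' T : Theory} (hT' : T' ⊆ T) {X E : Finset ℕ}
    (hE : Elementary (projT T' X) E) : Elementary T E ∧ E ⊆ X := by
  obtain ⟨hne, hsub, hout⟩ := hE
  have hX : E ⊆ X := fun a ha => (Finset.mem_inter.mp (atoms_projT_subset T' X (hsub ha))).2
  have hA : E ⊆ atoms T := fun a ha =>
    atoms_mono hT' (Finset.mem_inter.mp (atoms_projT_subset T' X (hsub ha))).1
  refine ⟨⟨hne, hA, fun Z hZ hZne => ?_⟩, hX⟩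
  exact outbound_transfer hT' hX (fun a ha => hX (hZ.1 ha)) (hout Z hZ hZne)

theorem stmt7 (T : Theory) (hHEF : HEF T) :
    ∀ T' ⊆ T, ∀ X : Finset ℕ, HEF (projT T' X) := by
  intro T' hT' X c hc E hE
  obtain ⟨hET, hEX⟩ := elementary_transfer hT' hE
  simp only [projT, Finset.mem_filter, Finset.mem_image] at hc
  obtain ⟨⟨c0, hc0, rfl⟩, -⟩ := hc
  calc (E ∩ (projC c0 X).head).card ≤ (E ∩ c0.head).card := by
        apply Finset.card_le_card
        intro a ha
        simp only [projC, Finset.mem_inter] at ha ⊢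
        exact ⟨ha.1, ha.2.1⟩
    _ ≤ 1 := hHEF c0 (hT' hc0) E hET
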